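/- Let d ≥ 2. Then (1_{d²} − F) * (M ⊗ 1_d) * (1_{d²} − F) = ∑_{i=0}^{d−1} u_i u_iᴴ, where M = Matrix.stdBasisMatrix 0 0 1 ∈ Matrix (Fin d) (Fin d) ℂ (the matrix |0⟩⟨0|), ⊗ is the Kronecker product, and for each i, u_i : Fin d × Fin d → ℂ is the vector with u_i (0,i) = 1, u_i (i,0) = −1 and all other entries 0 (so u_0 is the zero vector, and u_i u_iᴴ = Matrix.vecMulVec u_i (star u_i)). This computes the output of the complementary Werner–Holevo channel Φc(X) = (1/(2(d−1)))·(1 − F)(X ⊗ 1)(1 − F) on the pure state |0⟩⟨0|. -/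

import Mathlib

open Matrix

/-- The flip (swap) operator on `ℂ^d ⊗ ℂ^d`. -/
def flipOp (d : ℕ) : Matrix (Fin d × Fin d) (Fin d × Fin d) ℂ :=
  Matrix.of fun p q => if p.1 = q.2 ∧ p.2 = q.1 then 1 else 0

lemma sum_prod_ite {d : ℕ} (P Q : Prop) [Decidable P] [Decidable Q]
    (s t : Fin d) (v w : ℂ) :
    ∑ x : Fin d, (if P ∧ s = x then v else 0) * (if Q ∧ t = x then w else 0)
      = if P ∧ Q ∧ s = t then v * w else 0 := by
  rw [Finset.sum_eq_single s]
  · simp only [eq_self_iff_true, and_true, ite_zero_mul_ite_zero, @eq_comm _ s t]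
  · intro x _ hx
    rw [if_neg fun h => hx h.2.symm, zero_mul]
  · intro h
    exact absurd (Finset.mem_univ s) h

lemma flip_mul {d : ℕ} (B : Matrix (Fin d × Fin d) (Fin d × Fin d) ℂ) (p q) :
    (flipOp d * B) p q = B (p.2, p.1) q := by
  rw [Matrix.mul_apply]
  have : ∀ j, flipOp d p j = if j = (p.2, p.1) then 1 else 0 := by
    intro j
    simp [flipOp, Prod.ext_iff, and_comm, eq_comm]
  simp [this]

lemma mul_flip {d : ℕ} (B : Matrix (Fin d × Fin d) (Fin d × Fin d) ℂ) (p q) :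
    (B * flipOp d) p q = B p (q.2, q.1) := by
  rw [Matrix.mul_apply]
  have : ∀ j, flipOp d j q = if j = (q.2, q.1) then 1 else 0 := by
    intro j
    simp [flipOp, Prod.ext_iff]
  simp [this]

theorem stmt13 {d : ℕ} (hd : 2 ≤ d)
    (u : Fin d → Fin d × Fin d → ℂ)
    (hu : ∀ i p, u i p =
      (if p = ((⟨0, by omega⟩ : Fin d), i) then 1 else 0) +
      (if p = (i, (⟨0, by omega⟩ : Fin d)) then -1 else 0)) :
    (1 - flipOp d) *
        Matrix.kroneckerMap (· * ·)
          (Matrix.single (⟨0, by omega⟩ : Fin d) (⟨0, by omega⟩ : Fin d) (1 : ℂ))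
          (1 : Matrix (Fin d) (Fin d) ℂ) *
        (1 - flipOp d) =
      ∑ i, Matrix.vecMulVec (u i) (star (u i)) := by
  set z : Fin d := ⟨0, by omega⟩
  set A := Matrix.kroneckerMap (· * ·)
      (Matrix.single z z (1 : ℂ)) (1 : Matrix (Fin d) (Fin d) ℂ) with hA
  have expand : (1 - flipOp d) * A * (1 - flipOp d)
      = A - flipOp d * A - (A * flipOp d - flipOp d * (A * flipOp d)) := by
    noncomm_ring
  rw [expand]
  ext ⟨a, b⟩ ⟨c, e⟩
  simp only [Matrix.sub_apply, flip_mul, mul_flip, Matrix.sum_apply,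
    Matrix.vecMulVec_apply, Pi.star_apply, hu, hA, Matrix.kroneckerMap_apply,
    Matrix.single, Matrix.one_apply, Matrix.of_apply, Prod.mk.injEq]
  have hsum : (∑ x : Fin d,
      ((if a = z ∧ b = x then (1:ℂ) else 0) + if a = x ∧ b = z then -1 else 0) *
        star ((if c = z ∧ e = x then (1:ℂ) else 0) + if c = x ∧ e = z then -1 else 0))
      = (if a = z ∧ c = z ∧ b = e then 1 * 1 else 0)
        + (if a = z ∧ e = z ∧ b = c then 1 * -1 else 0)
        + ((if b = z ∧ c = z ∧ a = e then -1 * 1 else 0)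
        + (if b = z ∧ e = z ∧ a = c then -1 * -1 else 0)) := by
    have hre : ∀ x : Fin d,
        ((if a = z ∧ b = x then (1:ℂ) else 0) + if a = x ∧ b = z then -1 else 0) *
          star ((if c = z ∧ e = x then (1:ℂ) else 0) + if c = x ∧ e = z then -1 else 0)
        = (if a = z ∧ b = x then (1:ℂ) else 0) * (if c = z ∧ e = x then (1:ℂ) else 0)
          + (if a = z ∧ b = x then (1:ℂ) else 0) * (if e = z ∧ c = x then (-1:ℂ) else 0)
          + ((if b = z ∧ a = x then (-1:ℂ) else 0) * (if c = z ∧ e = x then (1:ℂ) else 0)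
          + (if b = z ∧ a = x then (-1:ℂ) else 0) * (if e = z ∧ c = x then (-1:ℂ) else 0)) := by
      intro x
      simp only [star_add, apply_ite (star : ℂ → ℂ), star_one, star_neg, star_zero,
        and_comm (a := a = x), and_comm (a := c = x)]
      ring
    rw [Finset.sum_congr rfl fun x _ => hre x]
    rw [Finset.sum_add_distrib, Finset.sum_add_distrib, Finset.sum_add_distrib,
      sum_prod_ite, sum_prod_ite, sum_prod_ite, sum_prod_ite]
  rw [hsum]
  clear hu hA expand hsum
  simp only [@eq_comm _ z a, @eq_comm _ z b, @eq_comm _ z c, @eq_comm _ z e,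
    ite_mul, one_mul, zero_mul, ← ite_and, and_assoc, mul_one, mul_neg, neg_neg, neg_zero]
  split_ifs <;> ring
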